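/- arXiv:2112.13257 — 3 statements merged into one kernel-verified Lean document; each statement's English description precedes it below -/
import Mathlib

section
/- The FRSD iterates satisfy, for every k ≥ 1, ‖x(k+1) − x(k)‖_R ≤ (σ_R + α(1+v)κ₃ ṽ L) ‖x(k) − x(k−1)‖_R + α (β κ₁ |||I_{np} − R|||_R + κ₃ nL) ‖x(k) − x̂(k)‖_C + α κ₃ nL ‖x̂(k) − x*_vec‖ + α κ₃² (3v + 2) ṽ² √n σ_R^{k−1} ‖∇f(x(k))‖. -/
open Matrix Filter
open scoped Kronecker

noncomputable section

/-- Euclidean norm on `ι → ℝ`. -/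
def eucNorm {ι : Type*} [Fintype ι] (z : ι → ℝ) : ℝ := Real.sqrt (∑ i, z i ^ 2)

/-- Spectral norm (operator 2-norm) of a square real matrix. -/
def specNorm {ι : Type*} [Fintype ι] (A : Matrix ι ι ℝ) : ℝ :=
  sSup {c : ℝ | ∃ z : ι → ℝ, eucNorm z ≤ 1 ∧ c = eucNorm (A.mulVec z)}

/-- Matrix norm induced by a vector norm `N`: `sup_{z ≠ 0} N (A z) / N z`. -/
def opNorm {ι : Type*} [Fintype ι] (N : (ι → ℝ) → ℝ) (A : Matrix ι ι ℝ) : ℝ :=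
  sSup {c : ℝ | ∃ z : ι → ℝ, z ≠ 0 ∧ c = N (A.mulVec z) / N z}

/-- `g` is the gradient of `f : ℝ^p → ℝ`. -/
def IsGradient {p : ℕ} (f : (Fin p → ℝ) → ℝ) (g : (Fin p → ℝ) → Fin p → ℝ) : Prop :=
  ∀ x, HasFDerivAt f (∑ j, g x j • (ContinuousLinearMap.proj j : (Fin p → ℝ) →L[ℝ] ℝ)) x

/-- `R = R̄ ⊗ I_p`. -/
def RK (n p : ℕ) (Rb : Matrix (Fin n) (Fin n) ℝ) :
    Matrix (Fin n × Fin p) (Fin n × Fin p) ℝ :=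
  Rb ⊗ₖ (1 : Matrix (Fin p) (Fin p) ℝ)

/-- `V_∞ = (1_n π^T) ⊗ I_p`. -/
def VinfK (n p : ℕ) (π : Fin n → ℝ) :
    Matrix (Fin n × Fin p) (Fin n × Fin p) ℝ :=
  (Matrix.of (fun _ j => π j) : Matrix (Fin n) (Fin n) ℝ) ⊗ₖ (1 : Matrix (Fin p) (Fin p) ℝ)

/-- `V(k) = R̄^k ⊗ I_p`. -/
def VK (n p : ℕ) (Rb : Matrix (Fin n) (Fin n) ℝ) (k : ℕ) :
    Matrix (Fin n × Fin p) (Fin n × Fin p) ℝ :=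
  (Rb ^ k) ⊗ₖ (1 : Matrix (Fin p) (Fin p) ℝ)

/-- `Ṽ(k)⁻¹ = diag(((R̄^k)_{11})⁻¹, …, ((R̄^k)_{nn})⁻¹) ⊗ I_p`. -/
def VtinvK (n p : ℕ) (Rb : Matrix (Fin n) (Fin n) ℝ) (k : ℕ) :
    Matrix (Fin n × Fin p) (Fin n × Fin p) ℝ :=
  Matrix.diagonal (fun q => ((Rb ^ k) q.1 q.1)⁻¹)

/-- `∇f(z) = (∇f_1(z_1), …, ∇f_n(z_n))` block-wise. -/
def gradf {n p : ℕ} (g : Fin n → (Fin p → ℝ) → Fin p → ℝ) (z : Fin n × Fin p → ℝ) :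
    Fin n × Fin p → ℝ :=
  fun q => g q.1 (fun j => z (q.1, j)) q.2

/-- `x*_vec = 1_n ⊗ x*`. -/
def starVec (n p : ℕ) (xstar : Fin p → ℝ) : Fin n × Fin p → ℝ := fun q => xstar q.2

end


namespace Aux

variable {ι : Type*} [Fintype ι]

lemma eucNorm_eq_norm (z : ι → ℝ) :
    eucNorm z = ‖(WithLp.equiv 2 (ι → ℝ)).symm z‖ := by
  rw [eucNorm, EuclideanSpace.norm_eq]
  simp [Real.norm_eq_abs, sq_abs]

lemma eucNorm_nonneg (z : ι → ℝ) : 0 ≤ eucNorm z := Real.sqrt_nonneg _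

lemma eucNorm_zero : eucNorm (0 : ι → ℝ) = 0 := by simp [eucNorm]

lemma eucNorm_add_le (z w : ι → ℝ) : eucNorm (z + w) ≤ eucNorm z + eucNorm w := by
  simp only [eucNorm_eq_norm]
  simpa using norm_add_le ((WithLp.equiv 2 (ι → ℝ)).symm z) ((WithLp.equiv 2 (ι → ℝ)).symm w)

lemma eucNorm_smul (a : ℝ) (z : ι → ℝ) : eucNorm (a • z) = |a| * eucNorm z := by
  simp only [eucNorm_eq_norm]
  rw [show (WithLp.equiv 2 (ι → ℝ)).symm (a • z) = a • (WithLp.equiv 2 (ι → ℝ)).symm z from rfl]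
  simp [norm_smul, Real.norm_eq_abs]

lemma eucNorm_neg (z : ι → ℝ) : eucNorm (-z) = eucNorm z := by simp [eucNorm]

lemma eucNorm_eq_zero {z : ι → ℝ} : eucNorm z = 0 ↔ z = 0 := by
  rw [eucNorm_eq_norm, norm_eq_zero]
  constructor
  · intro h; have := congrArg (WithLp.equiv 2 (ι → ℝ)) h; simpa using this
  · rintro rfl; rfl

lemma eucNorm_pos {z : ι → ℝ} (hz : z ≠ 0) : 0 < eucNorm z :=
  lt_of_le_of_ne (eucNorm_nonneg z) (fun h => hz (eucNorm_eq_zero.mp h.symm))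

lemma eucNorm_sq (z : ι → ℝ) : eucNorm z ^ 2 = ∑ i, z i ^ 2 :=
  Real.sq_sqrt (Finset.sum_nonneg fun i _ => sq_nonneg _)

lemma abs_le_eucNorm (z : ι → ℝ) (q : ι) : |z q| ≤ eucNorm z := by
  rw [eucNorm, ← Real.sqrt_sq_eq_abs]
  exact Real.sqrt_le_sqrt (Finset.single_le_sum (f := fun i => z i ^ 2)
    (fun i _ => sq_nonneg _) (Finset.mem_univ q))

lemma eucNorm_sum_le {κ : Type*} (s : Finset κ) (F : κ → ι → ℝ) :
    eucNorm (∑ i ∈ s, F i) ≤ ∑ i ∈ s, eucNorm (F i) := by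
  simp only [eucNorm_eq_norm]
  rw [show (WithLp.equiv 2 (ι → ℝ)).symm (∑ i ∈ s, F i)
      = ∑ i ∈ s, (WithLp.equiv 2 (ι → ℝ)).symm (F i) from
        map_sum (WithLp.linearEquiv 2 ℝ (ι → ℝ)).symm F s]
  exact norm_sum_le _ _

lemma eucNorm_le_of_sq_le {z : ι → ℝ} {c : ℝ} (hc : 0 ≤ c)
    (h : ∑ i, z i ^ 2 ≤ c ^ 2) : eucNorm z ≤ c := by
  rw [eucNorm]
  calc Real.sqrt (∑ i, z i ^ 2) ≤ Real.sqrt (c ^ 2) := Real.sqrt_le_sqrt h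
  _ = c := Real.sqrt_sq hc

/-- Frobenius norm bound. -/
lemma eucNorm_mulVec_le_frob (A : Matrix ι ι ℝ) (z : ι → ℝ) :
    eucNorm (A.mulVec z) ≤ Real.sqrt (∑ i, ∑ j, A i j ^ 2) * eucNorm z := by
  have hfr : 0 ≤ Real.sqrt (∑ i, ∑ j, A i j ^ 2) := Real.sqrt_nonneg _
  apply eucNorm_le_of_sq_le (mul_nonneg hfr (eucNorm_nonneg z))
  rw [mul_pow, Real.sq_sqrt (by positivity : (0:ℝ) ≤ ∑ i, ∑ j, A i j ^ 2),
    eucNorm_sq, Finset.sum_mul]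
  apply Finset.sum_le_sum
  intro i _
  have h := Finset.sum_mul_sq_le_sq_mul_sq Finset.univ (fun j => A i j) z
  simpa [Matrix.mulVec, dotProduct] using h

lemma eucNorm_single (q : ι) [DecidableEq ι] (a : ℝ) : eucNorm (Pi.single q a) = |a| := by
  rw [eucNorm, ← Real.sqrt_sq_eq_abs]
  congr 1
  rw [Finset.sum_eq_single q]
  · simp
  · intro b _ hb; simp [Pi.single_apply, hb]
  · simp

lemma eucNorm_diagonal_mulVec_le [DecidableEq ι] [Nonempty ι] {d : ι → ℝ} {c : ℝ}
    (hc : ∀ q, |d q| ≤ c) (z : ι → ℝ) :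
    eucNorm ((Matrix.diagonal d).mulVec z) ≤ c * eucNorm z := by
  have hc0 : 0 ≤ c := le_trans (abs_nonneg _) (hc (Classical.arbitrary ι))
  apply eucNorm_le_of_sq_le (mul_nonneg hc0 (eucNorm_nonneg z))
  rw [mul_pow, eucNorm_sq, Finset.mul_sum]
  apply Finset.sum_le_sum
  intro i _
  rw [Matrix.mulVec_diagonal, mul_pow]
  have : d i ^ 2 ≤ c ^ 2 := by
    rw [← sq_abs]
    exact pow_le_pow_left₀ (abs_nonneg _) (hc i) 2
  nlinarith [sq_nonneg (z i)]

lemma specSet_nonempty (A : Matrix ι ι ℝ) :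
    {c : ℝ | ∃ z : ι → ℝ, eucNorm z ≤ 1 ∧ c = eucNorm (A.mulVec z)}.Nonempty :=
  ⟨eucNorm (A.mulVec 0), 0, by simp [eucNorm_zero], rfl⟩

lemma specSet_bdd (A : Matrix ι ι ℝ) :
    BddAbove {c : ℝ | ∃ z : ι → ℝ, eucNorm z ≤ 1 ∧ c = eucNorm (A.mulVec z)} := by
  refine ⟨Real.sqrt (∑ i, ∑ j, A i j ^ 2), ?_⟩
  rintro c ⟨z, hz, rfl⟩
  calc eucNorm (A.mulVec z) ≤ Real.sqrt (∑ i, ∑ j, A i j ^ 2) * eucNorm z :=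
        eucNorm_mulVec_le_frob A z
  _ ≤ Real.sqrt (∑ i, ∑ j, A i j ^ 2) * 1 := by
        exact mul_le_mul_of_nonneg_left hz (Real.sqrt_nonneg _)
  _ = _ := mul_one _

lemma le_specNorm (A : Matrix ι ι ℝ) {z : ι → ℝ} (hz : eucNorm z ≤ 1) :
    eucNorm (A.mulVec z) ≤ specNorm A :=
  le_csSup (specSet_bdd A) ⟨z, hz, rfl⟩

lemma specNorm_nonneg (A : Matrix ι ι ℝ) : 0 ≤ specNorm A := by
  have := le_specNorm A (z := 0) (by simp [eucNorm_zero])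
  exact le_trans (eucNorm_nonneg _) this

lemma specNorm_le (A : Matrix ι ι ℝ) {c : ℝ}
    (h : ∀ z, eucNorm z ≤ 1 → eucNorm (A.mulVec z) ≤ c) : specNorm A ≤ c :=
  csSup_le (specSet_nonempty A) (by rintro b ⟨z, hz, rfl⟩; exact h z hz)

lemma eucNorm_mulVec_le_spec (A : Matrix ι ι ℝ) (z : ι → ℝ) :
    eucNorm (A.mulVec z) ≤ specNorm A * eucNorm z := by
  rcases eq_or_ne z 0 with rfl | hz
  · simp [eucNorm_zero, Matrix.mulVec_zero]
  · have hpos := eucNorm_pos hz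
    have h1 : eucNorm ((eucNorm z)⁻¹ • z) = 1 := by
      rw [eucNorm_smul, abs_of_nonneg (inv_nonneg.mpr hpos.le), inv_mul_cancel₀ hpos.ne']
    have h2 := le_specNorm A (le_of_eq h1)
    rw [Matrix.mulVec_smul, eucNorm_smul, abs_of_nonneg (inv_nonneg.mpr hpos.le)] at h2
    calc eucNorm (A.mulVec z) = eucNorm z * ((eucNorm z)⁻¹ * eucNorm (A.mulVec z)) := by
          field_simp
    _ ≤ eucNorm z * specNorm A := mul_le_mul_of_nonneg_left h2 hpos.le
    _ = _ := mul_comm _ _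

lemma abs_diag_le_specNorm [DecidableEq ι] (A : Matrix ι ι ℝ) (q : ι) :
    |A q q| ≤ specNorm A := by
  have h := le_specNorm A (z := Pi.single q 1) (by rw [eucNorm_single]; simp)
  refine le_trans ?_ h
  have : (A.mulVec (Pi.single q 1)) q = A q q := by
    simp [Matrix.mulVec_single]
  calc |A q q| = |(A.mulVec (Pi.single q 1)) q| := by rw [this]
  _ ≤ _ := abs_le_eucNorm _ q

section OpN
variable (N : (ι → ℝ) → ℝ) (hge : ∀ z : ι → ℝ, eucNorm z ≤ N z)
  (κ : ℝ) (hκ : ∀ z : ι → ℝ, N z ≤ κ * eucNorm z)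

include hge hκ in
lemma opNorm_mulVec_le (A : Matrix ι ι ℝ) (z : ι → ℝ) :
    N (A.mulVec z) ≤ opNorm N A * N z := by
  classical
  have hbdd : BddAbove {c : ℝ | ∃ z : ι → ℝ, z ≠ 0 ∧ c = N (A.mulVec z) / N z} := by
    refine ⟨κ * Real.sqrt (∑ i, ∑ j, A i j ^ 2), ?_⟩
    rintro c ⟨w, hw, rfl⟩
    have hNw : 0 < N w := lt_of_lt_of_le (eucNorm_pos hw) (hge w)
    rw [div_le_iff₀ hNw]
    calc N (A.mulVec w) ≤ κ * eucNorm (A.mulVec w) := hκ _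
    _ ≤ κ * (Real.sqrt (∑ i, ∑ j, A i j ^ 2) * eucNorm w) := by
        have hκ0 : 0 ≤ κ := by
          have h1 := hge w; have h2 := hκ w
          have := eucNorm_pos hw
          nlinarith
        exact mul_le_mul_of_nonneg_left (eucNorm_mulVec_le_frob A w) hκ0
    _ ≤ κ * Real.sqrt (∑ i, ∑ j, A i j ^ 2) * N w := by
        have hκ0 : 0 ≤ κ := by
          have h1 := hge w; have h2 := hκ w
          have := eucNorm_pos hw
          nlinarith
        rw [mul_assoc]
        exact mul_le_mul_of_nonneg_left
          (mul_le_mul_of_nonneg_left (hge w) (Real.sqrt_nonneg _)) hκ0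
  rcases eq_or_ne z 0 with rfl | hz
  · have hN0 : N 0 = 0 := by
      have h1 := hge (0 : ι → ℝ); have h2 := hκ (0 : ι → ℝ)
      rw [eucNorm_zero] at h1 h2
      nlinarith
    rw [Matrix.mulVec_zero, hN0]
    simp
  · have hNz : 0 < N z := lt_of_lt_of_le (eucNorm_pos hz) (hge z)
    have mem : N (A.mulVec z) / N z ∈
        {c : ℝ | ∃ z : ι → ℝ, z ≠ 0 ∧ c = N (A.mulVec z) / N z} := ⟨z, hz, rfl⟩
    have := le_csSup hbdd mem
    calc N (A.mulVec z) = N (A.mulVec z) / N z * N z := by field_simp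
    _ ≤ opNorm N A * N z := mul_le_mul_of_nonneg_right this hNz.le

end OpN


-- ## Section D : structure of row-stochastic matrices and Kronecker identities

section D
variable {n p : ℕ} {Rb : Matrix (Fin n) (Fin n) ℝ} {π : Fin n → ℝ}

lemma pow_nonneg' (hnonneg : ∀ i j, 0 ≤ Rb i j) (k : ℕ) : ∀ i j, 0 ≤ (Rb ^ k) i j := by
  induction k with
  | zero => intro i j; rcases eq_or_ne i j with rfl | h
            · simp
            · simp [Matrix.one_apply, h]
  | succ m ih =>
      intro i j
      rw [pow_succ, Matrix.mul_apply]
      exact Finset.sum_nonneg fun l _ => mul_nonneg (ih i l) (hnonneg l j)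

lemma pow_rowsum (hrow : ∀ i, ∑ j, Rb i j = 1) (k : ℕ) : ∀ i, ∑ j, (Rb ^ k) i j = 1 := by
  induction k with
  | zero => intro i; simp [Matrix.one_apply]
  | succ m ih =>
      intro i
      rw [pow_succ]
      simp only [Matrix.mul_apply]
      rw [Finset.sum_comm]
      calc ∑ l, ∑ j, (Rb ^ m) i l * Rb l j = ∑ l, (Rb ^ m) i l * ∑ j, Rb l j := by
            simp [Finset.mul_sum]
      _ = 1 := by simp only [hrow, mul_one]; exact ih i
  
lemma pow_diag_pos (hnonneg : ∀ i j, 0 ≤ Rb i j) (hdiag : ∀ i, 0 < Rb i i) (k : ℕ) :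
    ∀ i, 0 < (Rb ^ k) i i := by
  induction k with
  | zero => intro i; simp
  | succ m ih =>
      intro i
      rw [pow_succ, Matrix.mul_apply]
      have h1 : (Rb ^ m) i i * Rb i i ≤ ∑ l, (Rb ^ m) i l * Rb l i :=
        Finset.single_le_sum (f := fun l => (Rb ^ m) i l * Rb l i)
          (fun l _ => mul_nonneg (pow_nonneg' hnonneg m i l) (hnonneg l i))
          (Finset.mem_univ i)
      exact lt_of_lt_of_le (mul_pos (ih i) (hdiag i)) h1

lemma pow_entry_le_one (hnonneg : ∀ i j, 0 ≤ Rb i j) (hrow : ∀ i, ∑ j, Rb i j = 1) (k : ℕ)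
    (i j : Fin n) : (Rb ^ k) i j ≤ 1 := by
  have := pow_rowsum hrow k i
  rw [← this]
  exact Finset.single_le_sum (f := fun l => (Rb ^ k) i l)
    (fun l _ => pow_nonneg' hnonneg k i l) (Finset.mem_univ j)

lemma Rb_mul_ones (hrow : ∀ i, ∑ j, Rb i j = 1) (k : ℕ) :
    (Rb ^ k) * (Matrix.of (fun _ j => π j) : Matrix (Fin n) (Fin n) ℝ)
      = Matrix.of (fun _ j => π j) := by
  ext i j
  rw [Matrix.mul_apply]
  simp only [Matrix.of_apply]
  rw [← Finset.sum_mul, pow_rowsum hrow k i, one_mul]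

lemma ones_mul_Rb (hπstat : Matrix.vecMul π Rb = π) :
    (Matrix.of (fun _ j => π j) : Matrix (Fin n) (Fin n) ℝ) * Rb
      = Matrix.of (fun _ j => π j) := by
  ext i j
  rw [Matrix.mul_apply]
  simp only [Matrix.of_apply]
  have := congrFun hπstat j
  rw [Matrix.vecMul, dotProduct] at this
  simpa using this

lemma ones_mul_ones (hπsum : ∑ i, π i = 1) :
    (Matrix.of (fun _ j => π j) : Matrix (Fin n) (Fin n) ℝ)
      * (Matrix.of (fun _ j => π j) : Matrix (Fin n) (Fin n) ℝ)
      = Matrix.of (fun _ j => π j) := by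
  ext i j
  rw [Matrix.mul_apply]
  simp only [Matrix.of_apply]
  rw [← Finset.sum_mul, hπsum, one_mul]

lemma RK_mul_Vinf (hrow : ∀ i, ∑ j, Rb i j = 1) :
    RK n p Rb * VinfK n p π = VinfK n p π := by
  rw [RK, VinfK, ← Matrix.mul_kronecker_mul, Matrix.one_mul]
  have h := Rb_mul_ones (π := π) hrow 1
  rw [pow_one] at h
  rw [h]

lemma Vinf_mul_RK (hπstat : Matrix.vecMul π Rb = π) :
    VinfK n p π * RK n p Rb = VinfK n p π := by
  rw [RK, VinfK, ← Matrix.mul_kronecker_mul, Matrix.one_mul]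
  rw [ones_mul_Rb hπstat]

lemma Vinf_mul_Vinf (hπsum : ∑ i, π i = 1) :
    VinfK n p π * VinfK n p π = VinfK n p π := by
  rw [VinfK, ← Matrix.mul_kronecker_mul, Matrix.one_mul]
  rw [ones_mul_ones hπsum]

lemma VK_mul_RK (k : ℕ) : VK n p Rb k * RK n p Rb = VK n p Rb (k + 1) := by
  rw [VK, RK, VK, ← Matrix.mul_kronecker_mul, Matrix.one_mul, ← pow_succ]

lemma VK_mul_Vinf (hrow : ∀ i, ∑ j, Rb i j = 1) (k : ℕ) :
    VK n p Rb k * VinfK n p π = VinfK n p π := by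
  rw [VK, VinfK, ← Matrix.mul_kronecker_mul, Matrix.one_mul]
  rw [Rb_mul_ones (π := π) hrow k]

lemma VK_zero : VK n p Rb 0 = 1 := by
  rw [VK, pow_zero, Matrix.one_kronecker_one]

lemma VK_one : VK n p Rb 1 = RK n p Rb := by rw [VK, pow_one, RK]

lemma Vinf_mul_VK (hrow : ∀ i, ∑ j, Rb i j = 1) (hπstat : Matrix.vecMul π Rb = π) (k : ℕ) :
    VinfK n p π * VK n p Rb k = VinfK n p π := by
  induction k with
  | zero => rw [VK_zero, Matrix.mul_one]
  | succ m ih => rw [← VK_mul_RK, ← Matrix.mul_assoc, ih, Vinf_mul_RK hπstat]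

lemma sub_pow_eq (hrow : ∀ i, ∑ j, Rb i j = 1) (hπstat : Matrix.vecMul π Rb = π)
    (hπsum : ∑ i, π i = 1) :
    ∀ k, 1 ≤ k → (RK n p Rb - VinfK n p π) ^ k = VK n p Rb k - VinfK n p π := by
  intro k hk
  induction k with
  | zero => omega
  | succ m ih =>
      rcases Nat.eq_or_lt_of_le hk with h1 | h2
      · rw [← h1, pow_one, VK_one]
      · have hm : 1 ≤ m := by omega
        rw [pow_succ, ih hm, Matrix.sub_mul, Matrix.mul_sub, Matrix.mul_sub,
          VK_mul_RK, VK_mul_Vinf hrow, Vinf_mul_RK hπstat, Vinf_mul_Vinf hπsum]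
        abel

end D


-- ## Section G : gradients

lemma sum_grad_zero {n p : ℕ} (f : Fin n → (Fin p → ℝ) → ℝ)
    (g : Fin n → (Fin p → ℝ) → Fin p → ℝ) (hgrad : ∀ i, IsGradient (f i) (g i))
    (xstar : Fin p → ℝ) (hmin : ∀ w, ∑ i, f i xstar ≤ ∑ i, f i w) :
    ∀ j, ∑ i, g i xstar j = 0 := by
  have hF : HasFDerivAt (fun w => ∑ i, f i w)
      (∑ i, ∑ j, g i xstar j • (ContinuousLinearMap.proj j : (Fin p → ℝ) →L[ℝ] ℝ)) xstar :=
    HasFDerivAt.fun_sum fun i _ => hgrad i xstar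
  have hloc : IsLocalMin (fun w => ∑ i, f i w) xstar :=
    Filter.Eventually.of_forall hmin
  have hzero := hloc.hasFDerivAt_eq_zero hF
  intro j
  have := congrArg (fun (T : (Fin p → ℝ) →L[ℝ] ℝ) => T (Pi.single j 1)) hzero
  simp only [ContinuousLinearMap.sum_apply, ContinuousLinearMap.smul_apply,
    ContinuousLinearMap.proj_apply, ContinuousLinearMap.zero_apply] at this
  rw [← this]
  apply Finset.sum_congr rfl
  intro i _
  rw [Finset.sum_eq_single j]
  · simp
  · intro b _ hb; simp [Pi.single_apply, hb]
  · simp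

lemma gradf_lipschitz {n p : ℕ} (g : Fin n → (Fin p → ℝ) → Fin p → ℝ) {L : ℝ} (hL : 0 ≤ L)
    (hLip : ∀ i x x', eucNorm (g i x - g i x') ≤ L * eucNorm (x - x'))
    (z z' : Fin n × Fin p → ℝ) :
    eucNorm (gradf g z - gradf g z') ≤ L * eucNorm (z - z') := by
  apply eucNorm_le_of_sq_le (mul_nonneg hL (eucNorm_nonneg _))
  rw [mul_pow, eucNorm_sq]
  simp only [Pi.sub_apply]
  calc ∑ q : Fin n × Fin p, (gradf g z q - gradf g z' q) ^ 2
      = ∑ i : Fin n, ∑ j : Fin p,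
          ((g i (fun j' => z (i, j')) - g i (fun j' => z' (i, j'))) j) ^ 2 := by
        rw [Fintype.sum_prod_type]; rfl
  _ = ∑ i : Fin n, eucNorm (g i (fun j' => z (i, j')) - g i (fun j' => z' (i, j'))) ^ 2 := by
        simp_rw [eucNorm_sq]
  _ ≤ ∑ i : Fin n, (L * eucNorm ((fun j' => z (i, j')) - fun j' => z' (i, j'))) ^ 2 := by
        apply Finset.sum_le_sum
        intro i _
        have h := hLip i (fun j' => z (i, j')) (fun j' => z' (i, j'))
        have h0 := eucNorm_nonneg (g i (fun j' => z (i, j')) - g i (fun j' => z' (i, j')))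
        nlinarith [eucNorm_nonneg ((fun j' => z (i, j')) - fun j' => z' (i, j'))]
  _ = L ^ 2 * ∑ i : Fin n, ∑ j : Fin p, (z (i, j) - z' (i, j)) ^ 2 := by
        simp_rw [mul_pow, eucNorm_sq, Finset.mul_sum]
        rfl
  _ = L ^ 2 * ∑ q : Fin n × Fin p, (z q - z' q) ^ 2 := by rw [Fintype.sum_prod_type]


-- ## Section H : misc small lemmas

lemma abs_diag_le_eucNorm_mulVec_single [DecidableEq ι] (A : Matrix ι ι ℝ) (q : ι) :
    |A q q| ≤ eucNorm (A.mulVec (Pi.single q 1)) := by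
  have : (A.mulVec (Pi.single q 1)) q = A q q := by simp [Matrix.mulVec_single]
  calc |A q q| = |(A.mulVec (Pi.single q 1)) q| := by rw [this]
  _ ≤ _ := abs_le_eucNorm _ q

lemma VKdiff_diag {n p : ℕ} (Rb : Matrix (Fin n) (Fin n) ℝ) (π : Fin n → ℝ) (k : ℕ)
    (i : Fin n) (j : Fin p) :
    (VK n p Rb k - VinfK n p π) (i, j) (i, j) = (Rb ^ k) i i - π i := by
  simp [VK, VinfK, Matrix.kroneckerMap_apply, Matrix.one_apply]

lemma sum_le_sqrt_card_mul {n : ℕ} (a : Fin n → ℝ) (ha : ∀ i, 0 ≤ a i) :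
    ∑ i, a i ≤ Real.sqrt n * eucNorm a := by
  have h := Finset.sum_mul_sq_le_sq_mul_sq Finset.univ (fun _ => (1 : ℝ)) a
  simp only [one_pow, one_mul, Finset.sum_const, Finset.card_univ, Fintype.card_fin,
    nsmul_eq_mul] at h
  have h1 : ∑ i, a i = Real.sqrt ((∑ i, a i) ^ 2) :=
    (Real.sqrt_sq (Finset.sum_nonneg fun i _ => ha i)).symm
  rw [h1, eucNorm, ← Real.sqrt_mul (Nat.cast_nonneg n)]
  apply Real.sqrt_le_sqrt
  rw [mul_one] at h
  exact h

lemma eucNorm_const_block {n p : ℕ} (s : Fin p → ℝ) :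
    eucNorm (fun q : Fin n × Fin p => s q.2) = Real.sqrt n * eucNorm s := by
  rw [eucNorm, eucNorm, Fintype.sum_prod_type]
  calc Real.sqrt (∑ x : Fin n, ∑ y : Fin p, s (x, y).2 ^ 2)
      = Real.sqrt (∑ _x : Fin n, ∑ y : Fin p, s y ^ 2) := rfl
  _ = Real.sqrt ((n : ℝ) * ∑ y : Fin p, s y ^ 2) := by
      rw [Finset.sum_const, Finset.card_univ, Fintype.card_fin, nsmul_eq_mul]
  _ = _ := Real.sqrt_mul (Nat.cast_nonneg n) _

lemma Jmat_mulVec {n p : ℕ} (π : Fin n → ℝ) (hπpos : ∀ i, 0 < π i)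
    (G : Fin n × Fin p → ℝ) :
    (VinfK n p π * Matrix.diagonal (fun q : Fin n × Fin p => (π q.1)⁻¹)).mulVec G
      = fun q => ∑ i, G (i, q.2) := by
  funext q
  rw [← Matrix.mulVec_mulVec]
  have hD : (Matrix.diagonal fun q : Fin n × Fin p => (π q.1)⁻¹).mulVec G
      = fun q => (π q.1)⁻¹ * G q := by
    funext q'; rw [Matrix.mulVec_diagonal]
  rw [hD]
  simp only [Matrix.mulVec, dotProduct, VinfK, Matrix.kroneckerMap_apply,
    Matrix.of_apply]
  rw [Fintype.sum_prod_type]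
  apply Finset.sum_congr rfl
  intro i _
  rw [Finset.sum_eq_single q.2]
  · rw [Matrix.one_apply_eq, mul_one, ← mul_assoc, mul_inv_cancel₀ (hπpos i).ne', one_mul]
  · intro b _ hb; rw [Matrix.one_apply_ne (Ne.symm hb), mul_zero, zero_mul]
  · simp


lemma tri6 {V : Type*} [AddCommGroup V] (N : V → ℝ) (htri : ∀ a b, N (a + b) ≤ N a + N b)
    (a b c d e f : V) : N (a + b + c + d + e + f) ≤ N a + N b + N c + N d + N e + N f := by
  calc N (a + b + c + d + e + f) ≤ N (a + b + c + d + e) + N f := htri _ _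
  _ ≤ (N (a + b + c + d) + N e) + N f := by
      have := htri (a+b+c+d) e; linarith
  _ ≤ ((N (a + b + c) + N d) + N e) + N f := by
      have := htri (a+b+c) d; linarith
  _ ≤ (((N (a + b) + N c) + N d) + N e) + N f := by
      have := htri (a+b) c; linarith
  _ ≤ ((((N a + N b) + N c) + N d) + N e) + N f := by
      have := htri a b; linarith
  _ = _ := by ring

lemma sum_sq_kron_one {n p : ℕ} (A : Matrix (Fin n) (Fin n) ℝ) :
    ∑ q : Fin n × Fin p, ∑ q' : Fin n × Fin p,
      ((A ⊗ₖ (1 : Matrix (Fin p) (Fin p) ℝ)) q q') ^ 2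
      = (p : ℝ) * ∑ i, ∑ i', A i i' ^ 2 := by
  rw [Fintype.sum_prod_type]
  simp only [Fintype.sum_prod_type, Matrix.kroneckerMap_apply, Matrix.one_apply,
    mul_ite, mul_one, mul_zero]
  have hinner : ∀ (i i' : Fin n) (j : Fin p),
      ∑ j' : Fin p, (if j = j' then A i i' else 0) ^ 2 = A i i' ^ 2 := by
    intro i i' j
    rw [Finset.sum_eq_single j]
    · simp
    · intro b _ hb; simp [Ne.symm hb, hb]
    · simp
  calc ∑ i : Fin n, ∑ j : Fin p, ∑ i' : Fin n, ∑ j' : Fin p,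
        (if j = j' then A i i' else 0) ^ 2
      = ∑ i : Fin n, ∑ j : Fin p, ∑ i' : Fin n, A i i' ^ 2 := by
        apply Finset.sum_congr rfl; intro i _
        apply Finset.sum_congr rfl; intro j _
        apply Finset.sum_congr rfl; intro i' _
        exact hinner i i' j
  _ = (p : ℝ) * ∑ i, ∑ i', A i i' ^ 2 := by
        rw [Finset.mul_sum]
        apply Finset.sum_congr rfl; intro i _
        rw [Finset.sum_const, Finset.card_univ, Fintype.card_fin, nsmul_eq_mul]

lemma specNorm_le_frob {ι : Type*} [Fintype ι] (A : Matrix ι ι ℝ) :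
    specNorm A ≤ Real.sqrt (∑ i, ∑ j, A i j ^ 2) := by
  apply specNorm_le
  intro z hz
  calc eucNorm (A.mulVec z) ≤ Real.sqrt (∑ i, ∑ j, A i j ^ 2) * eucNorm z :=
        eucNorm_mulVec_le_frob A z
  _ ≤ _ * 1 := mul_le_mul_of_nonneg_left hz (Real.sqrt_nonneg _)
  _ = _ := mul_one _


end Aux

open Aux

set_option maxHeartbeats 1000000 in
/-- Lemma 8: for `k ≥ 1`,
`‖x(k+1)−x(k)‖_R ≤ (σ_R + α(1+v)κ₃ṽL)‖x(k)−x(k−1)‖_R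
  + α(βκ₁|||I−R|||_R + κ₃nL)‖x(k)−x̂(k)‖_C + ακ₃nL‖x̂(k)−x*_vec‖
  + ακ₃²(3v+2)ṽ²√n σ_R^{k−1} ‖∇f(x(k))‖`. -/
theorem stmt15 (n p : ℕ) (hn : 1 ≤ n) (hp : 1 ≤ p) (Rb : Matrix (Fin n) (Fin n) ℝ)
    (hnonneg : ∀ i j, 0 ≤ Rb i j) (hrow : ∀ i, ∑ j, Rb i j = 1)
    (hdiag : ∀ i, 0 < Rb i i)
    (hirr : ∀ i j, ∃ k : ℕ, 0 < (Rb ^ k) i j)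
    (π : Fin n → ℝ) (hπpos : ∀ i, 0 < π i) (hπsum : ∑ i, π i = 1)
    (hπstat : Matrix.vecMul π Rb = π)
    (f : Fin n → (Fin p → ℝ) → ℝ) (g : Fin n → (Fin p → ℝ) → Fin p → ℝ)
    (μ L : ℝ) (hμ : 0 < μ) (hμL : μ ≤ L)
    (hgrad : ∀ i, IsGradient (f i) (g i))
    (hLip : ∀ i x x', eucNorm (g i x - g i x') ≤ L * eucNorm (x - x'))
    (hsc : ∀ i x x',
      f i x + (∑ j, g i x j * (x' j - x j)) + μ / 2 * eucNorm (x' - x) ^ 2 ≤ f i x')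
    (xstar : Fin p → ℝ)
    (hmin : ∀ w, ∑ i, f i xstar ≤ ∑ i, f i w)
    (huniq : ∀ w, (∀ w', ∑ i, f i w ≤ ∑ i, f i w') → w = xstar)
    (NR NC : (Fin n × Fin p → ℝ) → ℝ)
    (hNRtri : ∀ z w, NR (z + w) ≤ NR z + NR w)
    (hNRhom : ∀ (a : ℝ) z, NR (a • z) = |a| * NR z)
    (hNRdef : ∀ z, NR z = 0 ↔ z = 0)
    (hNCtri : ∀ z w, NC (z + w) ≤ NC z + NC w)
    (hNChom : ∀ (a : ℝ) z, NC (a • z) = |a| * NC z)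
    (hNCdef : ∀ z, NC z = 0 ↔ z = 0)
    (hNRge : ∀ z, eucNorm z ≤ NR z) (hNCge : ∀ z, eucNorm z ≤ NC z)
    (κ₁ κ₂ κ₃ κ₄ : ℝ) (hκ₁ : 0 < κ₁) (hκ₂ : 0 < κ₂) (hκ₃ : 0 < κ₃) (hκ₄ : 0 < κ₄)
    (hκ₁R : ∀ z, NR z ≤ κ₁ * NC z) (hκ₂C : ∀ z, NC z ≤ κ₂ * NR z)
    (hκ₃R : ∀ z, NR z ≤ κ₃ * eucNorm z) (hκ₄C : ∀ z, NC z ≤ κ₄ * eucNorm z)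
    (v vt : ℝ) (hv : v = ⨆ k : ℕ, specNorm (VK n p Rb k))
    (hvt : vt = ⨆ k : ℕ, specNorm (VtinvK n p Rb k))
    (σR : ℝ) (hσRdef : σR = opNorm NR (RK n p Rb - VinfK n p π))
    (hσR0 : 0 < σR) (hσR1 : σR < 1)
    (α β : ℝ) (hα0 : 0 < α) (hβ0 : 0 < β) (hαβ : α * β < 1)
    (x y : ℕ → (Fin n × Fin p → ℝ)) (hy0 : y 0 = 0)
    (hxrec : ∀ k, x (k + 1) =
      (RK n p Rb).mulVec (x k) - α • (y k + (VtinvK n p Rb k).mulVec (gradf g (x k))))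
    (hyrec : ∀ k, y (k + 1) = y k + β • ((1 - RK n p Rb).mulVec (x (k + 1))))
    :
    ∀ k : ℕ, 1 ≤ k →
      NR (x (k + 1) - x k) ≤
        (σR + α * (1 + v) * κ₃ * vt * L) * NR (x k - x (k - 1))
          + α * (β * κ₁ * opNorm NR ((1 : Matrix (Fin n × Fin p) (Fin n × Fin p) ℝ)
                - RK n p Rb) + κ₃ * n * L)
              * NC (x k - (VinfK n p π).mulVec (x k))
          + α * κ₃ * n * L * eucNorm ((VinfK n p π).mulVec (x k) - starVec n p xstar)
          + α * κ₃ ^ 2 * (3 * v + 2) * vt ^ 2 * Real.sqrt n * σR ^ (k - 1)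
              * eucNorm (gradf g (x k)) := by
  
  -- preliminaries
  have hn0 : 0 < n := hn
  have hp0 : 0 < p := hp
  haveI : Nonempty (Fin n) := ⟨⟨0, hn0⟩⟩
  haveI : Nonempty (Fin p) := ⟨⟨0, hp0⟩⟩
  haveI : Nonempty (Fin n × Fin p) := ⟨(⟨0, hn0⟩, ⟨0, hp0⟩)⟩
  have hL0 : 0 < L := lt_of_lt_of_le hμ hμL
  have hσ0 : (0:ℝ) ≤ σR := hσR0.le
  have hκ₃1 : 1 ≤ κ₃ := by
    have hz : (Pi.single (Classical.arbitrary (Fin n × Fin p)) 1 : Fin n × Fin p → ℝ) ≠ 0 := by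
      intro h
      have := congrFun h (Classical.arbitrary (Fin n × Fin p))
      simp at this
    have h1 := hNRge (Pi.single (Classical.arbitrary (Fin n × Fin p)) 1)
    have h2 := hκ₃R (Pi.single (Classical.arbitrary (Fin n × Fin p)) 1)
    rw [eucNorm_single] at h1 h2
    simp only [abs_one] at h1 h2
    nlinarith
  have hsqn : 1 ≤ Real.sqrt n := by
    rw [show (1:ℝ) = Real.sqrt 1 by simp]
    exact Real.sqrt_le_sqrt (by exact_mod_cast hn)
  -- operator norm facts
  have hNRop : ∀ (A : Matrix (Fin n × Fin p) (Fin n × Fin p) ℝ) z,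
      NR (A.mulVec z) ≤ opNorm NR A * NR z :=
    fun A z => opNorm_mulVec_le NR hNRge κ₃ hκ₃R A z
  have hMV : ∀ z, NR ((RK n p Rb - VinfK n p π).mulVec z) ≤ σR * NR z := by
    intro z; rw [hσRdef]; exact hNRop _ z
  have hNR0 : NR 0 = 0 := by
    have := hNRhom 0 0
    simpa using this
  have hpow : ∀ (m : ℕ) z, NR (((RK n p Rb - VinfK n p π) ^ m).mulVec z) ≤ σR ^ m * NR z := by
    intro m
    induction m with
    | zero => intro z; simp [Matrix.one_mulVec]
    | succ m ih =>
        intro z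
        rw [pow_succ, ← Matrix.mulVec_mulVec]
        calc NR (((RK n p Rb - VinfK n p π) ^ m).mulVec
              ((RK n p Rb - VinfK n p π).mulVec z))
            ≤ σR ^ m * NR ((RK n p Rb - VinfK n p π).mulVec z) := ih _
        _ ≤ σR ^ m * (σR * NR z) :=
            mul_le_mul_of_nonneg_left (hMV z) (pow_nonneg hσ0 m)
        _ = σR ^ (m+1) * NR z := by ring
  have hVdiff : ∀ m, 1 ≤ m → ∀ z, eucNorm ((VK n p Rb m - VinfK n p π).mulVec z)
      ≤ κ₃ * σR ^ m * eucNorm z := by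
    intro m hm z
    rw [← sub_pow_eq hrow hπstat hπsum m hm]
    calc eucNorm (((RK n p Rb - VinfK n p π) ^ m).mulVec z)
        ≤ NR (((RK n p Rb - VinfK n p π) ^ m).mulVec z) := hNRge _
    _ ≤ σR ^ m * NR z := hpow m z
    _ ≤ σR ^ m * (κ₃ * eucNorm z) :=
        mul_le_mul_of_nonneg_left (hκ₃R z) (pow_nonneg hσ0 m)
    _ = κ₃ * σR ^ m * eucNorm z := by ring
  -- diagonal entry convergence
  have hentry : ∀ (m : ℕ) (i : Fin n), |(Rb ^ m) i i - π i| ≤ κ₃ * σR ^ m := by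
    intro m i
    rcases Nat.eq_zero_or_pos m with rfl | hm
    · have hπi1 : π i ≤ 1 := by
        rw [← hπsum]
        exact Finset.single_le_sum (f := fun l => π l) (fun l _ => (hπpos l).le)
          (Finset.mem_univ i)
      have : (Rb ^ 0) i i = 1 := by simp
      rw [this, pow_zero, mul_one, abs_of_nonneg (by linarith [hπpos i])]
      linarith [hπpos i]
    · have h1 := abs_diag_le_eucNorm_mulVec_single (VK n p Rb m - VinfK n p π)
        (i, Classical.arbitrary (Fin p))
      rw [VKdiff_diag] at h1
      calc |(Rb ^ m) i i - π i|
          ≤ eucNorm ((VK n p Rb m - VinfK n p π).mulVec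
              (Pi.single (i, Classical.arbitrary (Fin p)) 1)) := h1
      _ ≤ κ₃ * σR ^ m * eucNorm (Pi.single (i, Classical.arbitrary (Fin p)) (1:ℝ)) :=
          hVdiff m hm _
      _ = κ₃ * σR ^ m := by rw [eucNorm_single]; simp
  have hσtend : Tendsto (fun m : ℕ => κ₃ * σR ^ m) atTop (nhds 0) := by
    have := tendsto_pow_atTop_nhds_zero_of_lt_one hσ0 hσR1
    simpa using this.const_mul κ₃
  have htend : ∀ i, Tendsto (fun m => (Rb ^ m) i i) atTop (nhds (π i)) := by
    intro i
    have h0 : Tendsto (fun m => (Rb ^ m) i i - π i) atTop (nhds 0) := by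
      apply squeeze_zero_norm (fun m => hentry m i) hσtend
    have := h0.add_const (π i)
    simpa using this
  have hdiagpos : ∀ (m : ℕ) (i : Fin n), 0 < (Rb ^ m) i i := pow_diag_pos hnonneg hdiag
  -- uniform lower bound on diagonal entries
  obtain ⟨c, hc0, hcle⟩ : ∃ c : ℝ, 0 < c ∧ ∀ (m : ℕ) (i : Fin n), c ≤ (Rb ^ m) i i := by
    set ε : ℝ := (Finset.univ.inf' Finset.univ_nonempty π) / 2 with hε
    have hπinf : 0 < Finset.univ.inf' Finset.univ_nonempty π := by
      rw [Finset.lt_inf'_iff]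
      intro i _
      exact hπpos i
    have hε0 : 0 < ε := by positivity
    obtain ⟨K, hK⟩ := (Filter.eventually_atTop.mp (hσtend.eventually_lt_const hε0))
    set c2 : ℝ := (Finset.range (K+1)).inf' (by simp) (fun m => Finset.univ.inf'
      Finset.univ_nonempty (fun i => (Rb ^ m) i i)) with hc2
    have hc2pos : 0 < c2 := by
      rw [hc2, Finset.lt_inf'_iff]
      intro m _
      rw [Finset.lt_inf'_iff]
      intro i _
      exact hdiagpos m i
    refine ⟨min ε c2, lt_min hε0 hc2pos, ?_⟩
    intro m i
    rcases le_or_gt m K with hmK | hmK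
    · calc min ε c2 ≤ c2 := min_le_right _ _
      _ ≤ Finset.univ.inf' Finset.univ_nonempty (fun i => (Rb ^ m) i i) :=
          Finset.inf'_le _ (by simp; omega)
      _ ≤ (Rb ^ m) i i := Finset.inf'_le _ (Finset.mem_univ i)
    · have h1 := hK m (by omega)
      have h2 := hentry m i
      have h3 : π i ≥ 2 * ε := by
        rw [hε]
        have : Finset.univ.inf' Finset.univ_nonempty π ≤ π i :=
          Finset.inf'_le _ (Finset.mem_univ i)
        linarith
      have h4 : |(Rb ^ m) i i - π i| < ε := lt_of_le_of_lt h2 h1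
      rw [abs_lt] at h4
      calc min ε c2 ≤ ε := min_le_left _ _
      _ ≤ (Rb ^ m) i i := by linarith
  -- vt facts
  have hWbdd : BddAbove (Set.range fun m => specNorm (VtinvK n p Rb m)) := by
    refine ⟨c⁻¹, ?_⟩
    rintro b ⟨m, rfl⟩
    apply specNorm_le
    intro z hz
    calc eucNorm ((VtinvK n p Rb m).mulVec z) ≤ c⁻¹ * eucNorm z := by
          rw [VtinvK]
          apply eucNorm_diagonal_mulVec_le
          intro q
          rw [abs_of_pos (inv_pos.mpr (hdiagpos m q.1))]
          exact inv_anti₀ hc0 (hcle m q.1)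
    _ ≤ c⁻¹ * 1 := mul_le_mul_of_nonneg_left hz (inv_nonneg.mpr hc0.le)
    _ = c⁻¹ := mul_one _
  have hWk_le : ∀ m, specNorm (VtinvK n p Rb m) ≤ vt := by
    intro m
    rw [hvt]
    exact le_ciSup hWbdd m
  have hvt_entry : ∀ (m : ℕ) (q : Fin n × Fin p), ((Rb ^ m) q.1 q.1)⁻¹ ≤ vt := by
    intro m q
    have h1 := abs_diag_le_specNorm (VtinvK n p Rb m) q
    rw [VtinvK, Matrix.diagonal_apply_eq,
      abs_of_pos (inv_pos.mpr (hdiagpos m q.1))] at h1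
    exact le_trans h1 (hWk_le m)
  have hvt0 : 0 ≤ vt := le_trans (specNorm_nonneg _) (hWk_le 0)
  have hW : ∀ (m : ℕ) z, eucNorm ((VtinvK n p Rb m).mulVec z) ≤ vt * eucNorm z := by
    intro m z
    rw [VtinvK]
    apply eucNorm_diagonal_mulVec_le
    intro q
    rw [abs_of_pos (inv_pos.mpr (hdiagpos m q.1))]
    exact hvt_entry m q
  have hπinv_le : ∀ i, (π i)⁻¹ ≤ vt := by
    intro i
    have h1 : Tendsto (fun m => ((Rb ^ m) i i)⁻¹) atTop (nhds (π i)⁻¹) :=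
      (htend i).inv₀ (hπpos i).ne'
    exact le_of_tendsto' h1 (fun m => hvt_entry m (i, Classical.arbitrary (Fin p)))
  have hWdist : ∀ (m : ℕ) (q : Fin n × Fin p),
      |((Rb ^ m) q.1 q.1)⁻¹ - (π q.1)⁻¹| ≤ κ₃ * vt ^ 2 * σR ^ m := by
    intro m q
    have ha := hdiagpos m q.1
    have hb := hπpos q.1
    have hid : ((Rb ^ m) q.1 q.1)⁻¹ - (π q.1)⁻¹
        = (π q.1 - (Rb ^ m) q.1 q.1) * ((Rb ^ m) q.1 q.1)⁻¹ * (π q.1)⁻¹ := by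
      field_simp
    rw [hid, abs_mul, abs_mul, abs_of_pos (inv_pos.mpr ha), abs_of_pos (inv_pos.mpr hb)]
    have h1 : |π q.1 - (Rb ^ m) q.1 q.1| ≤ κ₃ * σR ^ m := by
      rw [abs_sub_comm]; exact hentry m q.1
    calc |π q.1 - (Rb ^ m) q.1 q.1| * ((Rb ^ m) q.1 q.1)⁻¹ * (π q.1)⁻¹
        ≤ (κ₃ * σR ^ m) * vt * vt := by
          apply mul_le_mul (mul_le_mul h1 (hvt_entry m q) (by positivity) (by positivity))
            (hπinv_le q.1) (by positivity)
          positivity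
    _ = κ₃ * vt ^ 2 * σR ^ m := by ring
  -- v facts
  have hVbdd : BddAbove (Set.range fun m => specNorm (VK n p Rb m)) := by
    refine ⟨Real.sqrt ((p : ℝ) * n), ?_⟩
    rintro b ⟨m, rfl⟩
    calc specNorm (VK n p Rb m) ≤ Real.sqrt (∑ q : Fin n × Fin p, ∑ q' : Fin n × Fin p,
          ((VK n p Rb m) q q') ^ 2) := specNorm_le_frob _
    _ ≤ Real.sqrt ((p : ℝ) * n) := by
        apply Real.sqrt_le_sqrt
        rw [VK, sum_sq_kron_one]
        apply mul_le_mul_of_nonneg_left _ (Nat.cast_nonneg p)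
        calc ∑ i, ∑ i', (Rb ^ m) i i' ^ 2 ≤ ∑ i, ∑ i', (Rb ^ m) i i' := by
              apply Finset.sum_le_sum; intro i _
              apply Finset.sum_le_sum; intro i' _
              have h0 := pow_nonneg' hnonneg m i i'
              have h1 := pow_entry_le_one hnonneg hrow m i i'
              nlinarith
        _ = (n : ℝ) := by
              simp only [pow_rowsum hrow m]
              simp
  have hVk_le : ∀ m, specNorm (VK n p Rb m) ≤ v := by
    intro m; rw [hv]; exact le_ciSup hVbdd m
  have hv0 : 0 ≤ v := le_trans (specNorm_nonneg _) (hVk_le 0)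
  have hVkz : ∀ (m : ℕ) z, eucNorm ((VK n p Rb m).mulVec z) ≤ v * eucNorm z := by
    intro m z
    calc eucNorm ((VK n p Rb m).mulVec z) ≤ specNorm (VK n p Rb m) * eucNorm z :=
          eucNorm_mulVec_le_spec _ z
    _ ≤ v * eucNorm z := mul_le_mul_of_nonneg_right (hVk_le m) (eucNorm_nonneg z)
  have hVinfz : ∀ z, eucNorm ((VinfK n p π).mulVec z) ≤ v * eucNorm z := by
    intro z
    have hle : ∀ m : ℕ, 1 ≤ m → eucNorm ((VinfK n p π).mulVec z)
        ≤ κ₃ * σR ^ m * eucNorm z + v * eucNorm z := by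
      intro m hm
      have h1 : (VinfK n p π).mulVec z
          = (VK n p Rb m).mulVec z - (VK n p Rb m - VinfK n p π).mulVec z := by
        rw [Matrix.sub_mulVec]; abel
      rw [h1]
      calc eucNorm ((VK n p Rb m).mulVec z - (VK n p Rb m - VinfK n p π).mulVec z)
          ≤ eucNorm ((VK n p Rb m).mulVec z)
            + eucNorm (-(VK n p Rb m - VinfK n p π).mulVec z) := by
            rw [sub_eq_add_neg]; exact eucNorm_add_le _ _
      _ = eucNorm ((VK n p Rb m).mulVec z)
            + eucNorm ((VK n p Rb m - VinfK n p π).mulVec z) := by rw [eucNorm_neg]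
      _ ≤ v * eucNorm z + κ₃ * σR ^ m * eucNorm z := by
            exact add_le_add (hVkz m z) (hVdiff m hm z)
      _ = κ₃ * σR ^ m * eucNorm z + v * eucNorm z := by ring
    have htd : Tendsto (fun m : ℕ => κ₃ * σR ^ m * eucNorm z + v * eucNorm z) atTop
        (nhds (0 * eucNorm z + v * eucNorm z)) := by
      exact Tendsto.add_const _ (hσtend.mul_const (eucNorm z))
    rw [zero_mul, zero_add] at htd
    apply ge_of_tendsto htd
    filter_upwards [Filter.eventually_ge_atTop 1] with m hm using hle m hm
  
  -- gradient facts
  have hLipTot : ∀ z z', eucNorm (gradf g z - gradf g z') ≤ L * eucNorm (z - z') :=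
    gradf_lipschitz g hL0.le hLip
  have hgradstar : ∀ j : Fin p, ∑ i, g i xstar j = 0 := sum_grad_zero f g hgrad xstar hmin
  -- recursion facts
  have hVinfM : VinfK n p π * RK n p Rb = VinfK n p π := Vinf_mul_RK hπstat
  have hMVinf : RK n p Rb * VinfK n p π = VinfK n p π := RK_mul_Vinf hrow
  have hVy : ∀ m, (VinfK n p π).mulVec (y m) = 0 := by
    intro m
    induction m with
    | zero => rw [hy0, Matrix.mulVec_zero]
    | succ m ih =>
        rw [hyrec m, Matrix.mulVec_add, ih, zero_add, Matrix.mulVec_smul,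
          Matrix.mulVec_mulVec, Matrix.mul_sub, Matrix.mul_one, hVinfM, sub_self,
          Matrix.zero_mulVec, smul_zero]
  have hId2 : ∀ m, (VinfK n p π).mulVec (x (m+1)) = (VinfK n p π).mulVec (x m)
      - α • ((VinfK n p π).mulVec ((VtinvK n p Rb m).mulVec (gradf g (x m)))) := by
    intro m
    rw [hxrec m, Matrix.mulVec_sub, Matrix.mulVec_smul, Matrix.mulVec_add, hVy,
      zero_add, Matrix.mulVec_mulVec, hVinfM]
  -- the decomposition
  intro k hk
  obtain ⟨j, rfl⟩ : ∃ j, k = j + 1 := ⟨k - 1, by omega⟩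
  have hkm : j + 1 - 1 = j := by omega
  rw [hkm]
  have hVinfM : VinfK n p π * RK n p Rb = VinfK n p π := Vinf_mul_RK hπstat
  have hMVinf : RK n p Rb * VinfK n p π = VinfK n p π := RK_mul_Vinf hrow
  have hVy : ∀ m, (VinfK n p π).mulVec (y m) = 0 := by
    intro m
    induction m with
    | zero => rw [hy0, Matrix.mulVec_zero]
    | succ m ih =>
        rw [hyrec m, Matrix.mulVec_add, ih, zero_add, Matrix.mulVec_smul,
          Matrix.mulVec_mulVec, Matrix.mul_sub, Matrix.mul_one, hVinfM, sub_self,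
          Matrix.zero_mulVec, smul_zero]
  have hdec : x (j+1+1) - x (j+1)
      = (RK n p Rb - VinfK n p π) *ᵥ (x (j+1) - x j)
      + -((α*β) • ((1 - RK n p Rb) *ᵥ (x (j+1) - VinfK n p π *ᵥ x (j+1))))
      + -(α • (VtinvK n p Rb j *ᵥ (gradf g (x (j+1)) - gradf g (x j))
            - VinfK n p π *ᵥ (VtinvK n p Rb j *ᵥ (gradf g (x (j+1)) - gradf g (x j)))))
      + -(α • ((VtinvK n p Rb (j+1) - VtinvK n p Rb j) *ᵥ gradf g (x (j+1))))
      + -(α • (VinfK n p π *ᵥ ((VtinvK n p Rb j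
            - Matrix.diagonal (fun q : Fin n × Fin p => (π q.1)⁻¹)) *ᵥ gradf g (x (j+1)))))
      + -(α • (VinfK n p π *ᵥ (Matrix.diagonal (fun q : Fin n × Fin p => (π q.1)⁻¹)
            *ᵥ gradf g (x (j+1))))) := by
    have hVMz : ∀ z, VinfK n p π *ᵥ (RK n p Rb *ᵥ z) = VinfK n p π *ᵥ z := by
      intro z; rw [Matrix.mulVec_mulVec, hVinfM]
    have hMVz : ∀ z, RK n p Rb *ᵥ (VinfK n p π *ᵥ z) = VinfK n p π *ᵥ z := by
      intro z; rw [Matrix.mulVec_mulVec, hMVinf]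
    rw [hxrec (j+1), hyrec j, hxrec j]
    simp only [Matrix.mulVec_sub, Matrix.sub_mulVec, Matrix.mulVec_add, Matrix.mulVec_smul,
      Matrix.one_mulVec, hVy, hVMz, hMVz, Matrix.mulVec_zero,
      smul_add, smul_sub, smul_zero]
    module
  
  -- six bounds
  have hκ₃0 : (0:ℝ) ≤ κ₃ := hκ₃.le
  have nA : NR ((RK n p Rb - VinfK n p π) *ᵥ (x (j+1) - x j)) ≤ σR * NR (x (j+1) - x j) :=
    hMV _
  have nB : NR (-((α*β) • ((1 - RK n p Rb) *ᵥ (x (j+1) - VinfK n p π *ᵥ x (j+1)))))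
      ≤ α * β * opNorm NR (1 - RK n p Rb) * κ₁ * NC (x (j+1) - VinfK n p π *ᵥ x (j+1)) := by
    rw [← neg_smul, hNRhom, abs_neg, abs_of_pos (mul_pos hα0 hβ0)]
    calc α * β * NR ((1 - RK n p Rb) *ᵥ (x (j+1) - VinfK n p π *ᵥ x (j+1)))
        ≤ α * β * (opNorm NR (1 - RK n p Rb) * NR (x (j+1) - VinfK n p π *ᵥ x (j+1))) := by
          exact mul_le_mul_of_nonneg_left (hNRop _ _) (mul_pos hα0 hβ0).le
    _ ≤ α * β * (opNorm NR (1 - RK n p Rb)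
          * (κ₁ * NC (x (j+1) - VinfK n p π *ᵥ x (j+1)))) := by
          have hop0 : 0 ≤ opNorm NR (1 - RK n p Rb) := by
            have h1 := hNRop (1 - RK n p Rb) (x (j+1))
            have h2 : 0 ≤ NR ((1 - RK n p Rb) *ᵥ x (j+1)) :=
              le_trans (eucNorm_nonneg _) (hNRge _)
            rcases le_or_gt 0 (opNorm NR (1 - RK n p Rb)) with h | h
            · exact h
            · -- use a nonzero vector
              have hz : (Pi.single (Classical.arbitrary (Fin n × Fin p)) 1
                  : Fin n × Fin p → ℝ) ≠ 0 := by
                intro hcontra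
                have := congrFun hcontra (Classical.arbitrary (Fin n × Fin p))
                simp at this
              have h3 := hNRop (1 - RK n p Rb)
                (Pi.single (Classical.arbitrary (Fin n × Fin p)) 1)
              have h4 : 0 < NR (Pi.single (Classical.arbitrary (Fin n × Fin p)) 1
                  : Fin n × Fin p → ℝ) := by
                have := hNRge (Pi.single (Classical.arbitrary (Fin n × Fin p)) 1)
                have h5 := eucNorm_pos hz
                linarith
              have h6 : 0 ≤ NR ((1 - RK n p Rb) *ᵥ
                  (Pi.single (Classical.arbitrary (Fin n × Fin p)) 1)) :=
                le_trans (eucNorm_nonneg _) (hNRge _)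
              nlinarith
          have := mul_le_mul_of_nonneg_left (hκ₁R (x (j+1) - VinfK n p π *ᵥ x (j+1))) hop0
          exact mul_le_mul_of_nonneg_left this (mul_pos hα0 hβ0).le
    _ = _ := by ring
  have nC : NR (-(α • (VtinvK n p Rb j *ᵥ (gradf g (x (j+1)) - gradf g (x j))
        - VinfK n p π *ᵥ (VtinvK n p Rb j *ᵥ (gradf g (x (j+1)) - gradf g (x j))))))
      ≤ α * (1+v) * κ₃ * vt * L * NR (x (j+1) - x j) := by
    rw [← neg_smul, hNRhom, abs_neg, abs_of_pos hα0]
    set u := VtinvK n p Rb j *ᵥ (gradf g (x (j+1)) - gradf g (x j)) with hu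
    have h1 : eucNorm (gradf g (x (j+1)) - gradf g (x j)) ≤ L * eucNorm (x (j+1) - x j) :=
      hLipTot _ _
    have h2 : eucNorm u ≤ vt * eucNorm (gradf g (x (j+1)) - gradf g (x j)) := hW j _
    have h3 : eucNorm (VinfK n p π *ᵥ u) ≤ v * eucNorm u := hVinfz u
    have h4 : eucNorm (u - VinfK n p π *ᵥ u) ≤ (1 + v) * eucNorm u := by
      calc eucNorm (u - VinfK n p π *ᵥ u)
          ≤ eucNorm u + eucNorm (-(VinfK n p π *ᵥ u)) := by
            rw [sub_eq_add_neg]; exact eucNorm_add_le _ _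
      _ = eucNorm u + eucNorm (VinfK n p π *ᵥ u) := by rw [eucNorm_neg]
      _ ≤ eucNorm u + v * eucNorm u := by linarith
      _ = (1 + v) * eucNorm u := by ring
    have h5 : NR (u - VinfK n p π *ᵥ u) ≤ κ₃ * ((1 + v) * eucNorm u) :=
      le_trans (hκ₃R _) (mul_le_mul_of_nonneg_left h4 hκ₃0)
    have hEd : eucNorm (x (j+1) - x j) ≤ NR (x (j+1) - x j) := hNRge _
    have hG0' : 0 ≤ eucNorm (gradf g (x (j+1)) - gradf g (x j)) := eucNorm_nonneg _
    have hu0 : 0 ≤ eucNorm u := eucNorm_nonneg _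
    have hd0 : 0 ≤ eucNorm (x (j+1) - x j) := eucNorm_nonneg _
    calc α * NR (u - VinfK n p π *ᵥ u) ≤ α * (κ₃ * ((1 + v) * eucNorm u)) :=
          mul_le_mul_of_nonneg_left h5 hα0.le
    _ ≤ α * (1+v) * κ₃ * vt * L * NR (x (j+1) - x j) := by
        have hvt_e : eucNorm u ≤ vt * (L * eucNorm (x (j+1) - x j)) := by
          calc eucNorm u ≤ vt * eucNorm (gradf g (x (j+1)) - gradf g (x j)) := h2
          _ ≤ vt * (L * eucNorm (x (j+1) - x j)) :=
              mul_le_mul_of_nonneg_left h1 hvt0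
        have hbig : eucNorm u ≤ vt * (L * NR (x (j+1) - x j)) := by
          calc eucNorm u ≤ vt * (L * eucNorm (x (j+1) - x j)) := hvt_e
          _ ≤ vt * (L * NR (x (j+1) - x j)) :=
              mul_le_mul_of_nonneg_left (mul_le_mul_of_nonneg_left hEd hL0.le) hvt0
        calc α * (κ₃ * ((1 + v) * eucNorm u))
            ≤ α * (κ₃ * ((1 + v) * (vt * (L * NR (x (j+1) - x j))))) := by
              apply mul_le_mul_of_nonneg_left _ hα0.le
              apply mul_le_mul_of_nonneg_left _ hκ₃0
              exact mul_le_mul_of_nonneg_left hbig (by linarith)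
        _ = α * (1+v) * κ₃ * vt * L * NR (x (j+1) - x j) := by ring
  have nD : NR (-(α • ((VtinvK n p Rb (j+1) - VtinvK n p Rb j) *ᵥ gradf g (x (j+1)))))
      ≤ α * κ₃ * (2 * κ₃ * vt^2 * σR^j) * eucNorm (gradf g (x (j+1))) := by
    rw [← neg_smul, hNRhom, abs_neg, abs_of_pos hα0]
    have hdiagsub : VtinvK n p Rb (j+1) - VtinvK n p Rb j
        = Matrix.diagonal (fun q : Fin n × Fin p =>
            ((Rb ^ (j+1)) q.1 q.1)⁻¹ - ((Rb ^ j) q.1 q.1)⁻¹) := by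
      rw [VtinvK, VtinvK, Matrix.diagonal_sub]
    have hbd : ∀ q : Fin n × Fin p,
        |((Rb ^ (j+1)) q.1 q.1)⁻¹ - ((Rb ^ j) q.1 q.1)⁻¹| ≤ 2 * κ₃ * vt^2 * σR^j := by
      intro q
      have h1 := hWdist (j+1) q
      have h2 := hWdist j q
      have h3 : σR ^ (j+1) ≤ σR ^ j :=
        pow_le_pow_of_le_one hσ0 hσR1.le (by omega)
      calc |((Rb ^ (j+1)) q.1 q.1)⁻¹ - ((Rb ^ j) q.1 q.1)⁻¹|
          ≤ |((Rb ^ (j+1)) q.1 q.1)⁻¹ - (π q.1)⁻¹| + |((Rb ^ j) q.1 q.1)⁻¹ - (π q.1)⁻¹| := by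
            have h4 := abs_sub_le (((Rb ^ (j+1)) q.1 q.1)⁻¹) ((π q.1)⁻¹)
              (((Rb ^ j) q.1 q.1)⁻¹)
            rw [abs_sub_comm ((π q.1)⁻¹) (((Rb ^ j) q.1 q.1)⁻¹)] at h4
            exact h4
      _ ≤ κ₃ * vt^2 * σR^(j+1) + κ₃ * vt^2 * σR^j := add_le_add h1 h2
      _ ≤ 2 * κ₃ * vt^2 * σR^j := by
            have h5 := mul_le_mul_of_nonneg_left h3 (mul_nonneg hκ₃0 (sq_nonneg vt))
            nlinarith [h5]
    calc α * NR ((VtinvK n p Rb (j+1) - VtinvK n p Rb j) *ᵥ gradf g (x (j+1)))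
        ≤ α * (κ₃ * eucNorm ((VtinvK n p Rb (j+1) - VtinvK n p Rb j) *ᵥ gradf g (x (j+1)))) :=
          mul_le_mul_of_nonneg_left (hκ₃R _) hα0.le
    _ ≤ α * (κ₃ * (2 * κ₃ * vt^2 * σR^j * eucNorm (gradf g (x (j+1))))) := by
        apply mul_le_mul_of_nonneg_left _ hα0.le
        apply mul_le_mul_of_nonneg_left _ hκ₃0
        rw [hdiagsub]
        exact eucNorm_diagonal_mulVec_le hbd _
    _ = _ := by ring
  have nE : NR (-(α • (VinfK n p π *ᵥ ((VtinvK n p Rb j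
        - Matrix.diagonal (fun q : Fin n × Fin p => (π q.1)⁻¹)) *ᵥ gradf g (x (j+1))))))
      ≤ α * κ₃ * (v * (κ₃ * vt^2 * σR^j)) * eucNorm (gradf g (x (j+1))) := by
    rw [← neg_smul, hNRhom, abs_neg, abs_of_pos hα0]
    have hdiagsub : VtinvK n p Rb j - Matrix.diagonal (fun q : Fin n × Fin p => (π q.1)⁻¹)
        = Matrix.diagonal (fun q : Fin n × Fin p =>
            ((Rb ^ j) q.1 q.1)⁻¹ - (π q.1)⁻¹) := by
      rw [VtinvK, Matrix.diagonal_sub]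
    have hin : eucNorm ((VtinvK n p Rb j
          - Matrix.diagonal (fun q : Fin n × Fin p => (π q.1)⁻¹)) *ᵥ gradf g (x (j+1)))
        ≤ κ₃ * vt^2 * σR^j * eucNorm (gradf g (x (j+1))) := by
      rw [hdiagsub]
      exact eucNorm_diagonal_mulVec_le (fun q => hWdist j q) _
    calc α * NR (VinfK n p π *ᵥ ((VtinvK n p Rb j
            - Matrix.diagonal (fun q : Fin n × Fin p => (π q.1)⁻¹)) *ᵥ gradf g (x (j+1))))
        ≤ α * (κ₃ * eucNorm (VinfK n p π *ᵥ ((VtinvK n p Rb j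
            - Matrix.diagonal (fun q : Fin n × Fin p => (π q.1)⁻¹)) *ᵥ gradf g (x (j+1))))) :=
          mul_le_mul_of_nonneg_left (hκ₃R _) hα0.le
    _ ≤ α * (κ₃ * (v * (κ₃ * vt^2 * σR^j * eucNorm (gradf g (x (j+1)))))) := by
        apply mul_le_mul_of_nonneg_left _ hα0.le
        apply mul_le_mul_of_nonneg_left _ hκ₃0
        calc eucNorm (VinfK n p π *ᵥ _) ≤ v * eucNorm ((VtinvK n p Rb j
              - Matrix.diagonal (fun q : Fin n × Fin p => (π q.1)⁻¹)) *ᵥ gradf g (x (j+1))) :=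
              hVinfz _
        _ ≤ v * (κ₃ * vt^2 * σR^j * eucNorm (gradf g (x (j+1)))) :=
              mul_le_mul_of_nonneg_left hin hv0
    _ = _ := by ring
  have nF : NR (-(α • (VinfK n p π *ᵥ (Matrix.diagonal (fun q : Fin n × Fin p => (π q.1)⁻¹)
        *ᵥ gradf g (x (j+1))))))
      ≤ α * κ₃ * ((n:ℝ) * L) * (NC (x (j+1) - VinfK n p π *ᵥ x (j+1))
          + eucNorm (VinfK n p π *ᵥ x (j+1) - starVec n p xstar)) := by
    rw [← neg_smul, hNRhom, abs_neg, abs_of_pos hα0]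
    have hJ : VinfK n p π *ᵥ (Matrix.diagonal (fun q : Fin n × Fin p => (π q.1)⁻¹)
          *ᵥ gradf g (x (j+1)))
        = fun q : Fin n × Fin p => ∑ i, gradf g (x (j+1)) (i, q.2) := by
      rw [Matrix.mulVec_mulVec]
      exact Jmat_mulVec π hπpos _
    set s : Fin p → ℝ := fun jj => ∑ i, gradf g (x (j+1)) (i, jj) with hs
    have hs_eq : s = ∑ i : Fin n,
        (g i (fun jj => x (j+1) (i, jj)) - g i xstar) := by
      funext jj
      rw [Finset.sum_apply]
      rw [hs]
      calc ∑ i, gradf g (x (j+1)) (i, jj)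
          = ∑ i, (g i (fun jj' => x (j+1) (i, jj')) jj - g i xstar jj)
            + ∑ i, g i xstar jj := by
            rw [← Finset.sum_add_distrib]
            apply Finset.sum_congr rfl
            intro i _
            simp [gradf]
      _ = ∑ i, (g i (fun jj' => x (j+1) (i, jj')) jj - g i xstar jj) := by
            rw [hgradstar jj, add_zero]
      _ = _ := by
            apply Finset.sum_congr rfl
            intro i _
            simp
    have hsnorm : eucNorm s ≤ L * (Real.sqrt n * eucNorm (x (j+1) - starVec n p xstar)) := by
      rw [hs_eq]
      calc eucNorm (∑ i : Fin n, (g i (fun jj => x (j+1) (i, jj)) - g i xstar))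
          ≤ ∑ i : Fin n, eucNorm (g i (fun jj => x (j+1) (i, jj)) - g i xstar) :=
            eucNorm_sum_le _ _
      _ ≤ ∑ i : Fin n, L * eucNorm ((fun jj => x (j+1) (i, jj)) - xstar) := by
            apply Finset.sum_le_sum
            intro i _
            exact hLip i _ _
      _ = L * ∑ i : Fin n, eucNorm ((fun jj => x (j+1) (i, jj)) - xstar) := by
            rw [Finset.mul_sum]
      _ ≤ L * (Real.sqrt n * eucNorm (fun i : Fin n =>
            eucNorm ((fun jj => x (j+1) (i, jj)) - xstar))) := by
            apply mul_le_mul_of_nonneg_left _ hL0.le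
            exact sum_le_sqrt_card_mul _ (fun i => eucNorm_nonneg _)
      _ = L * (Real.sqrt n * eucNorm (x (j+1) - starVec n p xstar)) := by
            congr 2
            have h1 : eucNorm (fun i : Fin n =>
                eucNorm ((fun jj => x (j+1) (i, jj)) - xstar)) ^ 2
                = eucNorm (x (j+1) - starVec n p xstar) ^ 2 := by
              rw [eucNorm_sq, eucNorm_sq, Fintype.sum_prod_type]
              apply Finset.sum_congr rfl
              intro i _
              rw [eucNorm_sq]
              rfl
            have h2 := eucNorm_nonneg (fun i : Fin n =>
                eucNorm ((fun jj => x (j+1) (i, jj)) - xstar))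
            have h3 := eucNorm_nonneg (x (j+1) - starVec n p xstar)
            nlinarith
    have hJnorm : eucNorm (VinfK n p π *ᵥ (Matrix.diagonal
          (fun q : Fin n × Fin p => (π q.1)⁻¹) *ᵥ gradf g (x (j+1))))
        ≤ (n:ℝ) * L * eucNorm (x (j+1) - starVec n p xstar) := by
      rw [hJ]
      have h1 : (fun q : Fin n × Fin p => ∑ i, gradf g (x (j+1)) (i, q.2))
          = fun q : Fin n × Fin p => s q.2 := rfl
      rw [h1, eucNorm_const_block]
      calc Real.sqrt n * eucNorm s
          ≤ Real.sqrt n * (L * (Real.sqrt n * eucNorm (x (j+1) - starVec n p xstar))) :=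
            mul_le_mul_of_nonneg_left hsnorm (Real.sqrt_nonneg _)
      _ = (Real.sqrt n * Real.sqrt n) * L * eucNorm (x (j+1) - starVec n p xstar) := by ring
      _ = (n:ℝ) * L * eucNorm (x (j+1) - starVec n p xstar) := by
            rw [Real.mul_self_sqrt (Nat.cast_nonneg n)]
    have hsplit : eucNorm (x (j+1) - starVec n p xstar)
        ≤ NC (x (j+1) - VinfK n p π *ᵥ x (j+1))
          + eucNorm (VinfK n p π *ᵥ x (j+1) - starVec n p xstar) := by
      have h1 : x (j+1) - starVec n p xstar
          = (x (j+1) - VinfK n p π *ᵥ x (j+1))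
            + (VinfK n p π *ᵥ x (j+1) - starVec n p xstar) := by abel
      rw [h1]
      calc eucNorm _ ≤ eucNorm (x (j+1) - VinfK n p π *ᵥ x (j+1))
            + eucNorm (VinfK n p π *ᵥ x (j+1) - starVec n p xstar) := eucNorm_add_le _ _
      _ ≤ _ := by linarith [hNCge (x (j+1) - VinfK n p π *ᵥ x (j+1))]
    calc α * NR (VinfK n p π *ᵥ (Matrix.diagonal (fun q : Fin n × Fin p => (π q.1)⁻¹)
            *ᵥ gradf g (x (j+1))))
        ≤ α * (κ₃ * eucNorm (VinfK n p π *ᵥ (Matrix.diagonal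
            (fun q : Fin n × Fin p => (π q.1)⁻¹) *ᵥ gradf g (x (j+1))))) :=
          mul_le_mul_of_nonneg_left (hκ₃R _) hα0.le
    _ ≤ α * (κ₃ * ((n:ℝ) * L * (NC (x (j+1) - VinfK n p π *ᵥ x (j+1))
          + eucNorm (VinfK n p π *ᵥ x (j+1) - starVec n p xstar)))) := by
        apply mul_le_mul_of_nonneg_left _ hα0.le
        apply mul_le_mul_of_nonneg_left _ hκ₃0
        calc eucNorm _ ≤ (n:ℝ) * L * eucNorm (x (j+1) - starVec n p xstar) := hJnorm
        _ ≤ (n:ℝ) * L * (NC (x (j+1) - VinfK n p π *ᵥ x (j+1))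
              + eucNorm (VinfK n p π *ᵥ x (j+1) - starVec n p xstar)) := by
            apply mul_le_mul_of_nonneg_left hsplit
            positivity
    _ = _ := by ring
  -- triangle inequality and final combination
  have tri := tri6 NR hNRtri
    ((RK n p Rb - VinfK n p π) *ᵥ (x (j+1) - x j))
    (-((α*β) • ((1 - RK n p Rb) *ᵥ (x (j+1) - VinfK n p π *ᵥ x (j+1)))))
    (-(α • (VtinvK n p Rb j *ᵥ (gradf g (x (j+1)) - gradf g (x j))
        - VinfK n p π *ᵥ (VtinvK n p Rb j *ᵥ (gradf g (x (j+1)) - gradf g (x j))))))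
    (-(α • ((VtinvK n p Rb (j+1) - VtinvK n p Rb j) *ᵥ gradf g (x (j+1)))))
    (-(α • (VinfK n p π *ᵥ ((VtinvK n p Rb j
        - Matrix.diagonal (fun q : Fin n × Fin p => (π q.1)⁻¹)) *ᵥ gradf g (x (j+1))))))
    (-(α • (VinfK n p π *ᵥ (Matrix.diagonal (fun q : Fin n × Fin p => (π q.1)⁻¹)
        *ᵥ gradf g (x (j+1))))))
  rw [← hdec] at tri
  have key : α * κ₃ * (2 * κ₃ * vt^2 * σR^j) * eucNorm (gradf g (x (j+1)))
      + α * κ₃ * (v * (κ₃ * vt^2 * σR^j)) * eucNorm (gradf g (x (j+1)))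
      ≤ α * κ₃ ^ 2 * (3 * v + 2) * vt ^ 2 * Real.sqrt n * σR ^ j
        * eucNorm (gradf g (x (j+1))) := by
    have h1 : (2 + v) ≤ (3 * v + 2) * Real.sqrt n := by nlinarith
    have hcoef : (0:ℝ) ≤ α * κ₃^2 * vt^2 * σR^j * eucNorm (gradf g (x (j+1))) := by
      have he := eucNorm_nonneg (gradf g (x (j+1)))
      have hp1 : (0:ℝ) ≤ α * κ₃^2 * vt^2 * σR^j := by positivity
      exact mul_nonneg hp1 he
    calc α * κ₃ * (2 * κ₃ * vt^2 * σR^j) * eucNorm (gradf g (x (j+1)))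
        + α * κ₃ * (v * (κ₃ * vt^2 * σR^j)) * eucNorm (gradf g (x (j+1)))
        = (α * κ₃^2 * vt^2 * σR^j * eucNorm (gradf g (x (j+1)))) * (2 + v) := by ring
    _ ≤ (α * κ₃^2 * vt^2 * σR^j * eucNorm (gradf g (x (j+1)))) * ((3 * v + 2) * Real.sqrt n) :=
        mul_le_mul_of_nonneg_left h1 hcoef
    _ = _ := by ring
  calc NR (x (j+1+1) - x (j+1)) ≤ _ := tri
  _ ≤ (σR + α * (1 + v) * κ₃ * vt * L) * NR (x (j+1) - x j)
      + α * (β * κ₁ * opNorm NR ((1 : Matrix (Fin n × Fin p) (Fin n × Fin p) ℝ)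
            - RK n p Rb) + κ₃ * ↑n * L) * NC (x (j+1) - VinfK n p π *ᵥ x (j+1))
      + α * κ₃ * ↑n * L * eucNorm (VinfK n p π *ᵥ x (j+1) - starVec n p xstar)
      + α * κ₃ ^ 2 * (3 * v + 2) * vt ^ 2 * Real.sqrt ↑n * σR ^ j
          * eucNorm (gradf g (x (j+1))) := by
    linarith [nA, nB, nC, nD, nE, nF, key]
  _ = _ := by norm_num
end

section
/- Let δ₁ > L/μ, let 0 < δ₂ < (1 − σ_C)/(κ₂ r), and let α satisfy 0 < α < min{ ((1 − σ_C) − κ₂ r δ₂)/(s₁(1 + δ₁) + s₂ δ₂), (1 − σ_R) δ₂/(s₄(1 + δ₁) + s₅ δ₂ + s_β), 1/(nL) }. Then the nonnegative 3×3 matrix Υ = [[σ_C + α s₁, α s₁, κ₂ r + α s₂], [α s₃, 1 − α n μ, 0], [α(s_β + s₄), α s₄, σ_R + α s₅]] has spectral radius strictly less than 1. -/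
open Matrix Filter
open scoped Kronecker

lemma aux_spec_lt_one (A : Matrix (Fin 3) (Fin 3) ℝ) (u : Fin 3 → ℝ)
    (hupos : ∀ j, 0 < u j) (hAnn : ∀ i j, 0 ≤ A i j)
    (hrow : ∀ i, ∑ j, A i j * u j < u i)
    (lam : ℂ) (w : Fin 3 → ℂ) (hw : w ≠ 0)
    (heig : (A.map (Complex.ofReal ·)).mulVec w = lam • w) :
    ‖lam‖ < 1 := by
  have heig' : ∀ i : Fin 3, ∑ j, (A i j : ℂ) * w j = lam * w i := by
    intro i
    have := congrFun heig i
    simpa [Matrix.mulVec, dotProduct, Matrix.map_apply] using this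
  obtain ⟨i, -, hi⟩ := Finset.exists_max_image Finset.univ
    (fun j => ‖w j‖ / u j) ⟨0, Finset.mem_univ 0⟩
  have hwi : 0 < ‖w i‖ := by
    obtain ⟨k, hk⟩ := Function.ne_iff.mp hw
    have h1 : 0 < ‖w k‖ / u k :=
      div_pos (by simpa using hk) (hupos k)
    have h2 := hi k (Finset.mem_univ k)
    have h3 := lt_of_lt_of_le h1 h2
    rcases div_pos_iff.mp h3 with ⟨h4, -⟩ | ⟨-, h5⟩
    · exact h4
    · exact absurd (hupos i) (not_lt.mpr (le_of_lt h5))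
  have hwj : ∀ j : Fin 3, ‖w j‖ ≤ ‖w i‖ / u i * u j := by
    intro j
    have h := hi j (Finset.mem_univ j)
    rw [div_le_div_iff₀ (hupos j) (hupos i)] at h
    rw [div_mul_eq_mul_div, le_div_iff₀ (hupos i)]
    linarith
  have key : ‖lam‖ * ‖w i‖ < ‖w i‖ := by
    calc ‖lam‖ * ‖w i‖
        = ‖∑ j, (A i j : ℂ) * w j‖ := by rw [heig' i, norm_mul]
      _ ≤ ∑ j, ‖(A i j : ℂ) * w j‖ := norm_sum_le _ _
      _ = ∑ j, A i j * ‖w j‖ := by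
          refine Finset.sum_congr rfl fun j _ => ?_
          rw [norm_mul, Complex.norm_real, Real.norm_eq_abs, abs_of_nonneg (hAnn i j)]
      _ ≤ ∑ j, A i j * (‖w i‖ / u i * u j) :=
          Finset.sum_le_sum fun j _ => mul_le_mul_of_nonneg_left (hwj j) (hAnn i j)
      _ = (‖w i‖ / u i) * ∑ j, A i j * u j := by
          rw [Finset.mul_sum]; exact Finset.sum_congr rfl fun j _ => by ring
      _ < (‖w i‖ / u i) * u i :=
          mul_lt_mul_of_pos_left (hrow i) (div_pos hwi (hupos i))
      _ = ‖w i‖ := div_mul_cancel₀ _ (ne_of_gt (hupos i))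
  nlinarith [key, hwi]

set_option maxHeartbeats 2000000 in
/-- Theorem 1: under the stated step-size condition, the nonnegative
`3×3` matrix `Υ` has spectral radius strictly less than 1 (every complex eigenvalue has
modulus `< 1`). -/
theorem stmt16 (n : ℕ) (hn : 1 ≤ n) (μ L : ℝ) (hμ : 0 < μ) (hμL : μ ≤ L)
    (σC σR : ℝ) (hσC0 : 0 < σC) (hσC1 : σC < 1) (hσR0 : 0 < σR) (hσR1 : σR < 1)
    (κ₁ κ₂ κ₃ κ₄ v vt β : ℝ)
    (hκ₁ : 0 < κ₁) (hκ₂ : 0 < κ₂) (hκ₃ : 0 < κ₃) (hκ₄ : 0 < κ₄)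
    (hv : 0 < v) (hvt : 0 < vt) (hβ : 0 < β)
    (r q : ℝ) (hr : 1 ≤ r) (hq : 0 ≤ q)
    (s₁ s₂ s₃ s₄ s₅ sβ : ℝ)
    (hs₁ : s₁ = κ₄ * n * L) (hs₂ : s₂ = κ₄ * vt * L) (hs₃ : s₃ = n * L)
    (hs₄ : s₄ = κ₃ * n * L) (hs₅ : s₅ = κ₃ * (1 + v) * vt * L) (hsβ : sβ = β * κ₁ * q)
    (δ₁ δ₂ : ℝ) (hδ₁ : L / μ < δ₁) (hδ₂0 : 0 < δ₂) (hδ₂ : δ₂ < (1 - σC) / (κ₂ * r))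
    (α : ℝ) (hα0 : 0 < α)
    (hα : α < min (min (((1 - σC) - κ₂ * r * δ₂) / (s₁ * (1 + δ₁) + s₂ * δ₂))
          ((1 - σR) * δ₂ / (s₄ * (1 + δ₁) + s₅ * δ₂ + sβ))) (1 / (n * L))) :
    ∀ lam : ℂ,
      (∃ w : Fin 3 → ℂ, w ≠ 0 ∧
          ((!![σC + α * s₁, α * s₁, κ₂ * r + α * s₂;
               α * s₃, 1 - α * n * μ, 0;
               α * (sβ + s₄), α * s₄, σR + α * s₅]).map
              (Complex.ofReal ·)).mulVec w = lam • w) →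
        ‖lam‖ < 1 := by
  rintro lam ⟨w, hw, heig⟩
  have hL : 0 < L := lt_of_lt_of_le hμ hμL
  have hn' : (1:ℝ) ≤ (n:ℝ) := by exact_mod_cast hn
  have hn0 : (0:ℝ) < (n:ℝ) := by linarith
  have hδ₁pos : 0 < δ₁ := lt_trans (div_pos hL hμ) hδ₁
  obtain ⟨hα1, hα3⟩ := lt_min_iff.mp hα
  obtain ⟨hα1, hα2⟩ := lt_min_iff.mp hα1
  have hs₁p : 0 < s₁ := by rw [hs₁]; positivity
  have hs₂p : 0 < s₂ := by rw [hs₂]; positivity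
  have hs₃p : 0 < s₃ := by rw [hs₃]; positivity
  have hs₄p : 0 < s₄ := by rw [hs₄]; positivity
  have hs₅p : 0 < s₅ := by rw [hs₅]; positivity
  have hsβp : 0 ≤ sβ := by rw [hsβ]; positivity
  have hden1 : 0 < s₁ * (1 + δ₁) + s₂ * δ₂ := by nlinarith
  have hden3 : 0 < s₄ * (1 + δ₁) + s₅ * δ₂ + sβ := by nlinarith
  have hnum1 : α * (s₁ * (1 + δ₁) + s₂ * δ₂) < (1 - σC) - κ₂ * r * δ₂ :=
    (lt_div_iff₀ hden1).mp hα1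
  have hnum3 : α * (s₄ * (1 + δ₁) + s₅ * δ₂ + sβ) < (1 - σR) * δ₂ :=
    (lt_div_iff₀ hden3).mp hα2
  have hnL : α * ((n:ℝ) * L) < 1 := (lt_div_iff₀ (by positivity)).mp hα3
  have hμn : α * (n:ℝ) * μ ≤ 1 := by nlinarith
  have ha1 : 0 ≤ α * s₁ := le_of_lt (mul_pos hα0 hs₁p)
  have ha2 : 0 ≤ α * s₂ := le_of_lt (mul_pos hα0 hs₂p)
  have ha3 : 0 ≤ α * s₃ := le_of_lt (mul_pos hα0 hs₃p)
  have ha4 : 0 ≤ α * s₄ := le_of_lt (mul_pos hα0 hs₄p)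
  have ha5 : 0 ≤ α * s₅ := le_of_lt (mul_pos hα0 hs₅p)
  have haβ4 : 0 ≤ α * (sβ + s₄) := mul_nonneg (le_of_lt hα0) (by linarith)
  have hκ₂r : 0 ≤ κ₂ * r := le_of_lt (mul_pos hκ₂ (lt_of_lt_of_le one_pos hr))
  have hmδ : L < μ * δ₁ := by
    have := (div_lt_iff₀ hμ).mp hδ₁; linarith
  refine aux_spec_lt_one _ ![1, δ₁, δ₂] ?_ ?_ ?_ lam w hw heig
  · intro j
    fin_cases j
    · norm_num
    · exact hδ₁pos
    · exact hδ₂0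
  · intro i j
    fin_cases i <;> fin_cases j <;>
      simp only [Fin.zero_eta, Fin.mk_one, Fin.reduceFinMk, Matrix.cons_val_two,
        Matrix.cons_val', Matrix.cons_val_zero, Matrix.cons_val_one, Matrix.head_cons,
        Matrix.empty_val', Matrix.cons_val_fin_one, Matrix.head_fin_const,
        Matrix.tail_cons, Matrix.of_apply] <;>
      linarith
  · intro i
    fin_cases i <;>
      simp only [Fin.sum_univ_three, Fin.zero_eta, Fin.mk_one, Fin.reduceFinMk,
        Matrix.cons_val_two, Matrix.cons_val', Matrix.cons_val_zero, Matrix.cons_val_one,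
        Matrix.head_cons, Matrix.empty_val', Matrix.cons_val_fin_one, Matrix.head_fin_const,
        Matrix.tail_cons, Matrix.of_apply]
    · nlinarith [hnum1]
    · nlinarith [mul_pos (mul_pos hα0 hn0) (sub_pos.mpr hmδ), hs₃]
    · nlinarith [hnum3]
end

section
/- Let (a_k), (b_k), (c_k), (d_k) be sequences of nonnegative real numbers such that Σ_{k=0}^∞ c_k < ∞, Σ_{k=0}^∞ d_k < ∞, and a_{k+1} ≤ (1 + c_k) a_k − b_k + d_k for all k ≥ 0. Then the sequence (a_k) converges and Σ_{k=0}^∞ b_k < ∞. -/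
open Matrix Filter
open scoped Kronecker

/-- deterministic supermartingale lemma: if `a, b, c, d ≥ 0`,
`Σ c_k < ∞`, `Σ d_k < ∞` and `a_{k+1} ≤ (1 + c_k) a_k − b_k + d_k`, then `(a_k)`
converges and `Σ b_k < ∞`. -/
theorem stmt17 (a b c d : ℕ → ℝ)
    (ha : ∀ k, 0 ≤ a k) (hb : ∀ k, 0 ≤ b k) (hc : ∀ k, 0 ≤ c k) (hd : ∀ k, 0 ≤ d k)
    (hcs : Summable c) (hds : Summable d)
    (hrec : ∀ k, a (k + 1) ≤ (1 + c k) * a k - b k + d k) :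
    (∃ l : ℝ, Tendsto a atTop (nhds l)) ∧ Summable b := by

  set P : ℕ → ℝ := fun k => ∏ j ∈ Finset.range k, (1 + c j) with hPdef
  have hP1 : ∀ k, 1 ≤ P k := by
    intro k
    simp only [hPdef]
    calc (1 : ℝ) = ∏ _j ∈ Finset.range k, (1 : ℝ) := by simp
      _ ≤ ∏ j ∈ Finset.range k, (1 + c j) :=
        Finset.prod_le_prod (fun j _ => by norm_num) (fun j _ => by linarith [hc j])
  have hPpos : ∀ k, 0 < P k := fun k => lt_of_lt_of_le one_pos (hP1 k)
  have hPsucc : ∀ k, P (k + 1) = P k * (1 + c k) := by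
    intro k; simp [hPdef, Finset.prod_range_succ]
  set C : ℝ := Real.exp (∑' j, c j) with hCdef
  have hPB : ∀ k, P k ≤ C := by
    intro k
    calc P k ≤ ∏ j ∈ Finset.range k, Real.exp (c j) := by
          apply Finset.prod_le_prod
          · intro j _; linarith [hc j]
          · intro j _; linarith [Real.add_one_le_exp (c j)]
      _ = Real.exp (∑ j ∈ Finset.range k, c j) := (Real.exp_sum _ _).symm
      _ ≤ C := by
          apply Real.exp_le_exp.mpr
          exact Summable.sum_le_tsum _ (fun j _ => hc j) hcs
  set A : ℕ → ℝ := fun k => a k / P k with hAdef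
  have hAnn : ∀ k, 0 ≤ A k := fun k => div_nonneg (ha k) (hPpos k).le
  have hA : ∀ k, A (k + 1) + b k / P (k + 1) ≤ A k + d k := by
    intro k
    have h1 : A (k + 1) + b k / P (k + 1) = (a (k + 1) + b k) / P (k + 1) := by
      simp [hAdef, ← add_div]
    have h2 : (a (k + 1) + b k) / P (k + 1) ≤ ((1 + c k) * a k + d k) / P (k + 1) := by
      exact (div_le_div_iff_of_pos_right (hPpos _)).mpr (by linarith [hrec k])
    have h3 : ((1 + c k) * a k + d k) / P (k + 1) = A k + d k / P (k + 1) := by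
      rw [hPsucc k, add_div, hAdef]
      have hck0 : (0 : ℝ) < 1 + c k := by linarith [hc k]
      have hck : (1 : ℝ) + c k ≠ 0 := hck0.ne'
      have hpk : P k ≠ 0 := (hPpos k).ne'
      field_simp
    have h4 : d k / P (k + 1) ≤ d k := div_le_self (hd k) (hP1 _)
    calc A (k + 1) + b k / P (k + 1) = (a (k + 1) + b k) / P (k + 1) := h1
      _ ≤ ((1 + c k) * a k + d k) / P (k + 1) := h2
      _ = A k + d k / P (k + 1) := h3
      _ ≤ A k + d k := by linarith
  set Bs : ℕ → ℝ := fun k => ∑ j ∈ Finset.range k, b j / P (j + 1) with hBsdef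
  set Ds : ℕ → ℝ := fun k => ∑ j ∈ Finset.range k, d j with hDsdef
  set u : ℕ → ℝ := fun k => A k + Bs k - Ds k with hudef
  have hBsnn : ∀ k, 0 ≤ Bs k :=
    fun k => Finset.sum_nonneg fun j _ => div_nonneg (hb j) (hPpos _).le
  have hDsB : ∀ k, Ds k ≤ ∑' j, d j := fun k => Summable.sum_le_tsum _ (fun j _ => hd j) hds
  have huanti : Antitone u := by
    apply antitone_nat_of_succ_le
    intro k
    have h := hA k
    simp only [hudef, hBsdef, hDsdef, Finset.sum_range_succ]
    linarith
  have hulb : ∀ k, -(∑' j, d j) ≤ u k := by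
    intro k
    have := hAnn k
    have := hBsnn k
    have := hDsB k
    simp only [hudef]
    linarith
  have hbdd : BddBelow (Set.range u) := ⟨-(∑' j, d j), by rintro x ⟨k, rfl⟩; exact hulb k⟩
  have hu : Tendsto u atTop (nhds (⨅ k, u k)) := tendsto_atTop_ciInf huanti hbdd
  -- summability of b j / P (j+1)
  have hsumdiv : Summable (fun j => b j / P (j + 1)) := by
    apply summable_of_sum_range_le (fun j => div_nonneg (hb j) (hPpos _).le)
      (c := u 0 + ∑' j, d j)
    intro n
    have h1 : u n ≤ u 0 := huanti (Nat.zero_le n)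
    have := hAnn n
    have := hDsB n
    simp only [hudef] at h1
    linarith
  have hsb : Summable b := by
    refine Summable.of_nonneg_of_le hb (fun j => ?_) (hsumdiv.mul_right C)
    · 
      calc b j = (b j / P (j + 1)) * P (j + 1) := (div_mul_cancel₀ _ (hPpos _).ne').symm
        _ ≤ (b j / P (j + 1)) * C :=
          mul_le_mul_of_nonneg_left (hPB _) (div_nonneg (hb j) (hPpos _).le)
  refine ⟨?_, hsb⟩
  -- convergence of a
  have hBst : Tendsto Bs atTop (nhds (∑' j, b j / P (j + 1))) :=
    hsumdiv.hasSum.tendsto_sum_nat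
  have hDst : Tendsto Ds atTop (nhds (∑' j, d j)) := hds.hasSum.tendsto_sum_nat
  have hAt : Tendsto A atTop (nhds ((⨅ k, u k) - (∑' j, b j / P (j + 1)) + ∑' j, d j)) := by
    have : ∀ k, A k = u k - Bs k + Ds k := by intro k; simp [hudef]; ring
    have ht := (hu.sub hBst).add hDst
    exact ht.congr fun k => (this k).symm
  have hPmono : Monotone P := by
    apply monotone_nat_of_le_succ
    intro k
    rw [hPsucc k]
    nlinarith [hPpos k, hc k]
  have hPt : Tendsto P atTop (nhds (⨆ k, P k)) :=
    tendsto_atTop_ciSup hPmono ⟨C, by rintro x ⟨k, rfl⟩; exact hPB k⟩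
  have hat := hAt.mul hPt
  refine ⟨_, hat.congr fun k => ?_⟩
  simp [hAdef]
  exact div_mul_cancel₀ _ (hPpos k).ne'
end
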